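/- Let h ≥ 1 and let (x_1,...,x_n) be a position of GCN(h; S_1,...,S_n) where each G_{S_i} is the h-stair of some sequence. Then (x_1,...,x_n) is a P-position (previous player wins) if and only if ⊕_i ⌊G_{S_i}(x_i)/h⌋ = 0 and (Σ_i x_i) ≡ 0 (mod h). -/

import Mathlib

open Finset

/-- mex of a set of naturals. -/
noncomputable def mex (T : Set ℕ) : ℕ := sInf Tᶜ

/-- Grundy value of the subtraction game Subtraction(S) on a heap of size x. -/
noncomputable def subG (S : Set ℕ) (x : ℕ) : ℕ :=
  mex {g | ∃ s, ∃ _ : s ∈ S ∧ 0 < s ∧ s ≤ x, g = subG S (x - s)}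
termination_by x
decreasing_by rename_i hs; obtain ⟨_, h1, h2⟩ := hs; omega

/-- Moves of the generalized cyclic Nimhoff GCN(h; S_1, ..., S_n). -/
def gcnMove {n : ℕ} (h : ℕ) (S : Fin n → Set ℕ) (x y : Fin n → ℕ) : Prop :=
  (∃ i, ∃ s, s ∈ S i ∧ 0 < s ∧ s ≤ x i ∧ y = Function.update x i (x i - s)) ∨
  (∃ s : Fin n → ℕ, (∀ i, s i ≤ x i) ∧ 0 < ∑ i, s i ∧ ∑ i, s i < h ∧
    y = fun i => x i - s i)

theorem gcnMove_sum_lt {n h : ℕ} {S : Fin n → Set ℕ} {x y : Fin n → ℕ}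
    (m : gcnMove h S x y) : ∑ i, y i < ∑ i, x i := by
  rcases m with ⟨i, s, _, hs0, hsx, rfl⟩ | ⟨s, hle, hpos, _, rfl⟩
  · refine Finset.sum_lt_sum (fun j _ => ?_) ⟨i, Finset.mem_univ i, ?_⟩
    · by_cases hj : j = i
      · subst hj; simp [Function.update]
      · simp [Function.update, hj]
    · simp [Function.update]; omega
  · obtain ⟨i, _, hi⟩ := Finset.exists_ne_zero_of_sum_ne_zero (by omega :
      ∑ i, s i ≠ 0)
    refine Finset.sum_lt_sum (fun j _ => by omega) ⟨i, Finset.mem_univ i, ?_⟩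
    have := hle i; omega

/-- Grundy value of a position of the generalized cyclic Nimhoff. -/
noncomputable def gcnGrundy (n h : ℕ) (S : Fin n → Set ℕ) (x : Fin n → ℕ) : ℕ :=
  mex {g | ∃ y, ∃ _ : gcnMove h S x y, g = gcnGrundy n h S y}
termination_by ∑ i, x i
decreasing_by exact gcnMove_sum_lt ‹_›

/-- P-positions of the generalized cyclic Nimhoff: every move leads to a
non-P-position. -/
def gcnPPos (n h : ℕ) (S : Fin n → Set ℕ) (x : Fin n → ℕ) : Prop :=
  ∀ y, ∀ _ : gcnMove h S x y, ¬ gcnPPos n h S y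
termination_by ∑ i, x i
decreasing_by exact gcnMove_sum_lt ‹_›

section Helpers

lemma mex_notMem {T : Set ℕ} (hT : Tᶜ.Nonempty) : mex T ∉ T := Nat.sInf_mem hT

lemma mem_of_lt_mex {T : Set ℕ} {g : ℕ} (hg : g < mex T) : g ∈ T := by
  by_contra hgT
  have hle : sInf Tᶜ ≤ g := Nat.sInf_le hgT
  unfold mex at hg
  omega

lemma subG_eq (S : Set ℕ) (x : ℕ) :
    subG S x = mex {g | ∃ s, ∃ _ : s ∈ S ∧ 0 < s ∧ s ≤ x, g = subG S (x - s)} := by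
  rw [subG]

lemma subG_compl_nonempty (S : Set ℕ) (x : ℕ) :
    {g | ∃ s, ∃ _ : s ∈ S ∧ 0 < s ∧ s ≤ x, g = subG S (x - s)}ᶜ.Nonempty := by
  have hsub : {g | ∃ s, ∃ _ : s ∈ S ∧ 0 < s ∧ s ≤ x, g = subG S (x - s)} ⊆
      ↑((Finset.range (x + 1)).image fun s => subG S (x - s)) := by
    rintro g ⟨s, ⟨hs, h0, hx⟩, rfl⟩
    simp only [Finset.coe_image, Set.mem_image, Finset.mem_coe, Finset.mem_range]
    exact ⟨s, by omega, rfl⟩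
  exact (Set.Finite.infinite_compl
    (Set.Finite.subset (Finset.finite_toSet _) hsub)).nonempty

lemma subG_move_ne {S : Set ℕ} {x s : ℕ} (hs : s ∈ S) (h0 : 0 < s) (hx : s ≤ x) :
    subG S (x - s) ≠ subG S x := by
  intro he
  have h1 : subG S x ∉ {g | ∃ s, ∃ _ : s ∈ S ∧ 0 < s ∧ s ≤ x, g = subG S (x - s)} :=
    (subG_eq S x) ▸ mex_notMem (subG_compl_nonempty S x)
  exact h1 ⟨s, ⟨hs, h0, hx⟩, he.symm⟩

lemma exists_subG_move {S : Set ℕ} {x g : ℕ} (hg : g < subG S x) :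
    ∃ s, (s ∈ S ∧ 0 < s ∧ s ≤ x) ∧ subG S (x - s) = g := by
  have hmem : g ∈ {g | ∃ s, ∃ _ : s ∈ S ∧ 0 < s ∧ s ≤ x, g = subG S (x - s)} :=
    mem_of_lt_mex ((subG_eq S x) ▸ hg)
  obtain ⟨s, hs, rfl⟩ := hmem
  exact ⟨s, hs, rfl⟩

section Stair

variable {h : ℕ} (hh : 0 < h) {S : Set ℕ} {b : ℕ → ℕ}
  (hst : ∀ x r, r < h → subG S (x * h + r) = b x * h + r)

include hh hst

lemma stair_subG (m : ℕ) : subG S m = b (m / h) * h + m % h := by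
  conv_lhs => rw [← Nat.div_add_mod m h, Nat.mul_comm]
  exact hst (m / h) (m % h) (Nat.mod_lt _ hh)

lemma stair_div (m : ℕ) : subG S m / h = b (m / h) := by
  rw [stair_subG hh hst m, Nat.mul_comm, Nat.mul_add_div hh,
    Nat.div_eq_of_lt (Nat.mod_lt _ hh), Nat.add_zero]

lemma stair_mod (m : ℕ) : subG S m % h = m % h := by
  rw [stair_subG hh hst m, Nat.mul_comm, Nat.mul_add_mod, Nat.mod_mod_of_dvd _ dvd_rfl]

end Stair

lemma fold_xor_eq {n : ℕ} (f : Fin n → ℕ) (i : Fin n) :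
    Finset.univ.fold (· ^^^ · : ℕ → ℕ → ℕ) 0 f =
      f i ^^^ (Finset.univ.erase i).fold (· ^^^ · : ℕ → ℕ → ℕ) 0 f := by
  conv_lhs => rw [← Finset.insert_erase (Finset.mem_univ i)]
  rw [Finset.fold_insert (Finset.notMem_erase i _)]

lemma testBit_fold_false {ι : Type*} [DecidableEq ι] (t : Finset ι) (f : ι → ℕ) (k : ℕ)
    (hc : ∀ i ∈ t, Nat.testBit (f i) k = false) :
    Nat.testBit (t.fold (· ^^^ · : ℕ → ℕ → ℕ) 0 f) k = false := by
  induction t using Finset.induction_on with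
  | empty => simp
  | insert _ _ hi IH =>
      rename_i j t'
      rw [Finset.fold_insert hi, Nat.testBit_xor, hc j (Finset.mem_insert_self _ _),
        IH fun i hit => hc i (Finset.mem_insert_of_mem hit)]
      rfl

lemma exists_xor_lt {n : ℕ} (f : Fin n → ℕ)
    (hX : Finset.univ.fold (· ^^^ · : ℕ → ℕ → ℕ) 0 f ≠ 0) :
    ∃ i : Fin n, f i ^^^ Finset.univ.fold (· ^^^ · : ℕ → ℕ → ℕ) 0 f < f i := by
  obtain ⟨k, hk, hk'⟩ := Nat.exists_most_significant_bit hX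
  have hbit : ∃ i : Fin n, Nat.testBit (f i) k = true := by
    by_contra hc
    push_neg at hc
    have := testBit_fold_false Finset.univ f k (fun i _ => by
      simpa using hc i)
    rw [this] at hk; exact Bool.false_ne_true hk
  obtain ⟨i, hi⟩ := hbit
  refine ⟨i, Nat.lt_of_testBit k ?_ hi fun j hj => ?_⟩
  · rw [Nat.testBit_xor, hi, hk]; rfl
  · rw [Nat.testBit_xor, hk' j hj]; simp

lemma exists_parts {ι : Type*} [DecidableEq ι] (t : Finset ι) (c : ι → ℕ) :
    ∀ r : ℕ, r ≤ ∑ i ∈ t, c i →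
      ∃ s : ι → ℕ, (∀ i, s i ≤ c i) ∧ (∀ i ∉ t, s i = 0) ∧ ∑ i ∈ t, s i = r := by
  induction t using Finset.induction_on with
  | empty =>
      intro r hr
      simp only [Finset.sum_empty, Nat.le_zero] at hr
      exact ⟨fun _ => 0, fun _ => Nat.zero_le _, fun _ _ => rfl, by simp [hr]⟩
  | insert _ _ hi IH =>
      rename_i j t'
      intro r hr
      rw [Finset.sum_insert hi] at hr
      obtain ⟨s, h1, h2, h3⟩ := IH (r - min r (c j)) (by omega)
      refine ⟨Function.update s j (min r (c j)), ?_, ?_, ?_⟩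
      · intro i
        by_cases hij : i = j
        · subst hij; simp [Function.update]
        · simpa [Function.update, hij] using h1 i
      · intro i hit
        have hij : i ≠ j := fun he => hit (he ▸ Finset.mem_insert_self _ _)
        rw [Function.update_of_ne hij]
        exact h2 i fun hm => hit (Finset.mem_insert_of_mem hm)
      · have hsum : ∑ x ∈ t', Function.update s j (min r (c j)) x = ∑ x ∈ t', s x :=
          Finset.sum_congr rfl fun i hit =>
            Function.update_of_ne (fun he => hi (by rwa [he] at hit)) _ _
        rw [Finset.sum_insert hi, Function.update_self, hsum, h3]
        omega

end Helpers

section Main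

variable {n h : ℕ} {S : Fin n → Set ℕ} {a : Fin n → ℕ → ℕ}

lemma Q_no_move (hh : 0 < h)
    (hstair : ∀ i x r, r < h → subG (S i) (x * h + r) = a i x * h + r)
    {x y : Fin n → ℕ}
    (hF : Finset.univ.fold (· ^^^ · : ℕ → ℕ → ℕ) 0 (fun i => subG (S i) (x i) / h) = 0)
    (hsum : (∑ i, x i) % h = 0)
    (hm : gcnMove h S x y) :
    ¬ (Finset.univ.fold (· ^^^ · : ℕ → ℕ → ℕ) 0 (fun i => subG (S i) (y i) / h) = 0 ∧
       (∑ i, y i) % h = 0) := by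
  rintro ⟨hFy, hsumy⟩
  rcases hm with ⟨i, s, hsS, hs0, hsx, rfl⟩ | ⟨s, hle, hpos, hlt, rfl⟩
  · -- type 1 move on heap i
    have hsy : ∑ j, Function.update x i (x i - s) j + s = ∑ j, x j := by
      rw [Finset.sum_update_of_mem (Finset.mem_univ i), Finset.sdiff_singleton_eq_erase,
        ← Finset.add_sum_erase _ _ (Finset.mem_univ i)]
      omega
    have hdx : h ∣ ∑ j, x j := Nat.dvd_of_mod_eq_zero hsum
    have hdy : h ∣ ∑ j, Function.update x i (x i - s) j := Nat.dvd_of_mod_eq_zero hsumy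
    have hds : h ∣ s := by
      have hd := Nat.dvd_sub hdx hdy
      rwa [show (∑ j, x j) - ∑ j, Function.update x i (x i - s) j = s by omega] at hd
    have hmod : (x i - s) % h = x i % h := by
      obtain ⟨k, hk⟩ := hds
      have hxk : x i = (x i - s) + h * k := by omega
      conv_rhs => rw [hxk, Nat.add_mul_mod_self_left]
    -- compare the two fold equations
    have hCeq : (Finset.univ.erase i).fold (· ^^^ · : ℕ → ℕ → ℕ) 0
          (fun j => subG (S j) (Function.update x i (x i - s) j) / h)
        = (Finset.univ.erase i).fold (· ^^^ · : ℕ → ℕ → ℕ) 0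
          (fun j => subG (S j) (x j) / h) :=
      Finset.fold_congr fun j hj => by
        rw [Function.update_of_ne (Finset.ne_of_mem_erase hj)]
    rw [fold_xor_eq _ i, hCeq] at hFy
    rw [fold_xor_eq _ i] at hF
    simp only [Function.update_self] at hFy
    have hfx := xor_eq_zero_iff.mp hF
    have hfy := xor_eq_zero_iff.mp hFy
    have hdiveq : subG (S i) (x i - s) / h = subG (S i) (x i) / h := hfy.trans hfx.symm
    rw [stair_div hh (hstair i), stair_div hh (hstair i)] at hdiveq
    have hGeq : subG (S i) (x i - s) = subG (S i) (x i) := by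
      rw [stair_subG hh (hstair i), stair_subG hh (hstair i), hdiveq, hmod]
    exact subG_move_ne hsS hs0 hsx hGeq
  · -- cyclic move
    have hsy : (∑ j, (x j - s j)) + ∑ j, s j = ∑ j, x j := by
      rw [← Finset.sum_add_distrib]
      exact Finset.sum_congr rfl fun j _ => by have := hle j; omega
    have hdx : h ∣ ∑ j, x j := Nat.dvd_of_mod_eq_zero hsum
    have hdy : h ∣ ∑ j, (x j - s j) := Nat.dvd_of_mod_eq_zero hsumy
    have hds : h ∣ ∑ j, s j := by
      have hd := Nat.dvd_sub hdx hdy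
      rwa [show (∑ j, x j) - ∑ j, (x j - s j) = ∑ j, s j by omega] at hd
    have := Nat.eq_zero_of_dvd_of_lt hds hlt
    omega

lemma move_to_Q (hh : 0 < h)
    (hstair : ∀ i x r, r < h → subG (S i) (x * h + r) = a i x * h + r)
    {x : Fin n → ℕ}
    (hQ : ¬ (Finset.univ.fold (· ^^^ · : ℕ → ℕ → ℕ) 0 (fun i => subG (S i) (x i) / h) = 0 ∧
       (∑ i, x i) % h = 0)) :
    ∃ y, gcnMove h S x y ∧
      (Finset.univ.fold (· ^^^ · : ℕ → ℕ → ℕ) 0 (fun i => subG (S i) (y i) / h) = 0 ∧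
       (∑ i, y i) % h = 0) := by
  by_cases hX : Finset.univ.fold (· ^^^ · : ℕ → ℕ → ℕ) 0 (fun i => subG (S i) (x i) / h) = 0
  · -- XOR already zero, fix the sum using a cyclic move inside the remainders
    have hr : (∑ i, x i) % h ≠ 0 := fun hr0 => hQ ⟨hX, hr0⟩
    have hrh : (∑ i, x i) % h < h := Nat.mod_lt _ hh
    have hrle : (∑ i, x i) % h ≤ ∑ i, x i % h := by
      calc (∑ i, x i) % h = (∑ i, x i % h) % h := Finset.sum_nat_mod _ _ _
        _ ≤ ∑ i, x i % h := Nat.mod_le _ _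
    obtain ⟨s, hs1, -, hs3⟩ := exists_parts Finset.univ (fun i => x i % h) _ hrle
    refine ⟨fun i => x i - s i,
      Or.inr ⟨s, fun i => le_trans (hs1 i) (Nat.mod_le _ _),
        by rw [hs3]; exact Nat.pos_of_ne_zero hr, by rw [hs3]; exact hrh, rfl⟩, ?_, ?_⟩
    · have hdiv : ∀ i, (x i - s i) / h = x i / h := by
        intro i
        have h1 := hs1 i
        have h2 : x i % h < h := Nat.mod_lt _ hh
        have hdm := Nat.div_add_mod (x i) h
        have hc : h * (x i / h) = x i / h * h := Nat.mul_comm _ _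
        have hc2 : (x i / h + 1) * h = x i / h * h + h := by ring
        exact Nat.div_eq_of_lt_le (by omega) (by omega)
      calc Finset.univ.fold (· ^^^ · : ℕ → ℕ → ℕ) 0 (fun i => subG (S i) (x i - s i) / h)
          = Finset.univ.fold (· ^^^ · : ℕ → ℕ → ℕ) 0 (fun i => subG (S i) (x i) / h) :=
            Finset.fold_congr fun j _ => by
              rw [stair_div hh (hstair j), stair_div hh (hstair j), hdiv j]
        _ = 0 := hX
    · have hsy : (∑ j, (x j - s j)) + ∑ j, s j = ∑ j, x j := by
        rw [← Finset.sum_add_distrib]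
        exact Finset.sum_congr rfl fun j _ => by
          have := le_trans (hs1 j) (Nat.mod_le _ _); omega
      have hdm := Nat.div_add_mod (∑ j, x j) h
      have he : ∑ j, (x j - s j) = h * ((∑ j, x j) / h) := by omega
      rw [he, Nat.mul_mod_right]
  · -- XOR nonzero: play a Nim-like move on one heap
    obtain ⟨i, hilt⟩ := exists_xor_lt _ hX
    have hrh : (∑ j, x j) % h < h := Nat.mod_lt _ hh
    have hr'h : (x i + (h - (∑ j, x j) % h)) % h < h := Nat.mod_lt _ hh
    have hfi : subG (S i) (x i) = (subG (S i) (x i) / h) * h + x i % h := by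
      conv_lhs => rw [stair_subG hh (hstair i)]
      rw [stair_div hh (hstair i)]
    set X := Finset.univ.fold (· ^^^ · : ℕ → ℕ → ℕ) 0 (fun i => subG (S i) (x i) / h)
      with hXdef
    set b := subG (S i) (x i) / h ^^^ X with hbdef
    set r' := (x i + (h - (∑ j, x j) % h)) % h with hr'def
    have hg' : b * h + r' < subG (S i) (x i) := by
      have h1 : b + 1 ≤ subG (S i) (x i) / h := hilt
      have h2 : b * h + h ≤ (subG (S i) (x i) / h) * h := by
        calc b * h + h = (b + 1) * h := by ring
          _ ≤ _ := Nat.mul_le_mul_right h h1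
      omega
    obtain ⟨s, ⟨hsS, hs0, hsx⟩, hsg⟩ := exists_subG_move hg'
    refine ⟨Function.update x i (x i - s), Or.inl ⟨i, s, hsS, hs0, hsx, rfl⟩, ?_, ?_⟩
    · have hyd : subG (S i) (x i - s) / h = b := by
        rw [hsg, Nat.mul_comm, Nat.mul_add_div hh, Nat.div_eq_of_lt hr'h, Nat.add_zero]
      rw [fold_xor_eq _ i]
      have hC : (Finset.univ.erase i).fold (· ^^^ · : ℕ → ℕ → ℕ) 0
            (fun j => subG (S j) (Function.update x i (x i - s) j) / h)
          = (Finset.univ.erase i).fold (· ^^^ · : ℕ → ℕ → ℕ) 0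
            (fun j => subG (S j) (x j) / h) :=
        Finset.fold_congr fun j hj => by
          rw [Function.update_of_ne (Finset.ne_of_mem_erase hj)]
      rw [hC]
      simp only [Function.update_self]
      rw [hyd]
      have hCX : (Finset.univ.erase i).fold (· ^^^ · : ℕ → ℕ → ℕ) 0
          (fun j => subG (S j) (x j) / h) = subG (S i) (x i) / h ^^^ X := by
        rw [hXdef, fold_xor_eq _ i, ← Nat.xor_assoc, Nat.xor_self, Nat.zero_xor]
      rw [hCX, ← hbdef, Nat.xor_self]
    · have hyi_mod : (x i - s) % h = r' := by
        have hm := stair_mod hh (hstair i) (x i - s)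
        rw [hsg, Nat.mul_comm, Nat.mul_add_mod, Nat.mod_eq_of_lt hr'h] at hm
        exact hm.symm
      have e1 : ∑ j, Function.update x i (x i - s) j
          = (x i - s) + ∑ j ∈ Finset.univ.erase i, x j := by
        rw [Finset.sum_update_of_mem (Finset.mem_univ i), Finset.sdiff_singleton_eq_erase]
      have e2 : ∑ j, x j = x i + ∑ j ∈ Finset.univ.erase i, x j :=
        (Finset.add_sum_erase _ _ (Finset.mem_univ i)).symm
      calc (∑ j, Function.update x i (x i - s) j) % h
          = ((x i - s) + ∑ j ∈ Finset.univ.erase i, x j) % h := by rw [e1]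
        _ = ((x i - s) % h + ∑ j ∈ Finset.univ.erase i, x j) % h :=
            (Nat.mod_add_mod _ _ _).symm
        _ = ((x i + (h - (∑ j, x j) % h)) % h + ∑ j ∈ Finset.univ.erase i, x j) % h := by
            rw [hyi_mod, hr'def]
        _ = ((x i + (h - (∑ j, x j) % h)) + ∑ j ∈ Finset.univ.erase i, x j) % h :=
            Nat.mod_add_mod _ _ _
        _ = ((x i + ∑ j ∈ Finset.univ.erase i, x j) + (h - (∑ j, x j) % h)) % h := by
            ring_nf
        _ = ((∑ j, x j) + (h - (∑ j, x j) % h)) % h := by rw [← e2]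
        _ = ((∑ j, x j) % h + (h - (∑ j, x j) % h)) % h := (Nat.mod_add_mod _ _ _).symm
        _ = h % h := by congr 1; omega
        _ = 0 := Nat.mod_self h

end Main

/-- characterization of P-positions of the generalized cyclic
Nimhoff when each subtraction game has an `h`-stair Grundy sequence. -/
theorem gcn_ppos_iff (n h : ℕ) (hh : 0 < h) (S : Fin n → Set ℕ)
    (hS : ∀ i, ∀ s ∈ S i, 0 < s) (a : Fin n → ℕ → ℕ)
    (hstair : ∀ i x r, r < h → subG (S i) (x * h + r) = a i x * h + r)
    (x : Fin n → ℕ) :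
    gcnPPos n h S x ↔
      Finset.univ.fold (· ^^^ · : ℕ → ℕ → ℕ) 0 (fun i => subG (S i) (x i) / h) = 0 ∧
        (∑ i, x i) % h = 0 := by
  classical
  suffices H : ∀ N, ∀ x : Fin n → ℕ, ∑ i, x i = N →
      (gcnPPos n h S x ↔
        (Finset.univ.fold (· ^^^ · : ℕ → ℕ → ℕ) 0 (fun i => subG (S i) (x i) / h) = 0 ∧
          (∑ i, x i) % h = 0)) by
    exact H _ x rfl
  intro N
  induction N using Nat.strong_induction_on with
  | _ N IH =>
    intro x hxN
    rw [gcnPPos]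
    constructor
    · intro hP
      by_contra hQ
      obtain ⟨y, hm, hQy⟩ := move_to_Q hh hstair hQ
      exact hP y hm ((IH _ (hxN ▸ gcnMove_sum_lt hm) y rfl).mpr hQy)
    · rintro ⟨hF, hs⟩ y hm hPy
      exact Q_no_move hh hstair hF hs hm
        ((IH _ (hxN ▸ gcnMove_sum_lt hm) y rfl).mp hPy)
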